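/- Let X be a second countable Baire complex topological vector space, C a continuous linear operator on X with dense range, and (S(z))_{z ∈ ℂ} an entire C-regularized group of operators on X. Then (S(z))_{z ∈ ℂ} is diskcyclic (i.e., the set {S(z) : z ∈ ℂ} is diskcyclic) if and only if (S(z))_{z ∈ ℂ} is disk transitive (i.e., the set {S(z) : z ∈ ℂ} is disk transitive). -/

import Mathlib

open scoped Pointwise

/-- An entire `C`-regularized group of operators (with `C` of dense range) on a second
countable Baire complex topological vector space is diskcyclic if and only if it is
disk transitive. -/
theorem stmt_18 {X : Type*} [AddCommGroup X] [Module ℂ X] [TopologicalSpace X]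
    [IsTopologicalAddGroup X] [ContinuousSMul ℂ X] [SecondCountableTopology X]
    [BaireSpace X]
    (C : X →L[ℂ] X) (hC : DenseRange ⇑C)
    (S : ℂ → X →L[ℂ] X)
    (hS0 : S 0 = C)
    (hSadd : ∀ z w : ℂ, S (z + w) ∘L C = S z ∘L S w)
    (hSent : ∀ (x : X) (f : X →L[ℂ] ℂ), Differentiable ℂ fun z : ℂ => f (S z x)) :
    (∃ x : X, Dense {y : X | ∃ α : ℂ, ‖α‖ ≤ 1 ∧ ∃ z : ℂ, y = α • S z x}) ↔
    (∀ U V : Set X, IsOpen U → IsOpen V → U.Nonempty → V.Nonempty →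
      ∃ α : ℂ, α ≠ 0 ∧ ‖α‖ ≤ 1 ∧ ∃ z : ℂ, (⇑(S z) '' (α • U) ∩ V).Nonempty) := by
  -- commutation relation: `C (S v y) = S v (C y)`
  have hcomm : ∀ (v : ℂ) (y : X), C (S v y) = S v (C y) := by
    intro v y
    have h1 : S (0 + v) ∘L C = S 0 ∘L S v := hSadd 0 v
    have h2 : S (v + 0) ∘L C = S v ∘L S 0 := hSadd v 0
    have h3 : S 0 ∘L S v = S v ∘L S 0 := by rw [← h1, ← h2, zero_add, add_zero]
    have h4 := congrArg (fun T : X →L[ℂ] X => T y) h3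
    simpa [hS0] using h4
  constructor
  · -- diskcyclic → disk transitive
    rintro ⟨x, hx⟩ U V hU hV hUne hVne
    by_cases h0V : (0 : X) ∈ V
    · -- easy case: `0 ∈ V`; map a small multiple of a point of `U` near `0`
      obtain ⟨u, hu⟩ := hUne
      have hcont : Continuous fun α : ℂ => α • C u := by fun_prop
      have h0 : (fun α : ℂ => α • C u) 0 ∈ V := by simpa using h0V
      have hnhds : {α : ℂ | α • C u ∈ V} ∈ nhds (0 : ℂ) :=
        hcont.continuousAt.preimage_mem_nhds (hV.mem_nhds h0)
      obtain ⟨ε, hε, hball⟩ := Metric.mem_nhds_iff.1 hnhds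
      have hεr : (0:ℝ) < min ε 1 := lt_min hε one_pos
      set α₀ : ℂ := ((min ε 1 : ℝ) : ℂ) / 2 with hα₀
      have hα₀0 : α₀ ≠ 0 := by
        simp only [hα₀, div_ne_zero_iff]
        constructor
        · exact_mod_cast ne_of_gt hεr
        · norm_num
      have hα₀n : ‖α₀‖ = (min ε 1) / 2 := by
        rw [hα₀, norm_div]
        simp [Complex.norm_real, abs_of_pos hεr]
      have hmem : α₀ • C u ∈ V := by
        apply hball
        simp only [Metric.mem_ball, dist_zero_right, hα₀n]
        calc (min ε 1) / 2 < min ε 1 := by linarith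
        _ ≤ ε := min_le_left _ _
      refine ⟨α₀, hα₀0, ?_, 0, S 0 (α₀ • u), ⟨α₀ • u, Set.smul_mem_smul_set hu, rfl⟩, ?_⟩
      · rw [hα₀n]
        have : min ε 1 ≤ 1 := min_le_right _ _
        linarith
      · rw [hS0]
        simpa [map_smul] using hmem
    · -- case `0 ∉ V`
      by_cases hβex : ∃ β : ℂ, β ≠ 0 ∧ ‖β‖ ≤ 1 ∧ ∃ w : ℂ, β • S w x ∈ U
      · -- main case: a nonzero orbit point lies in `U`
        obtain ⟨β, hβ0, hβ1, w, hβU⟩ := hβex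
        set g : X → X := fun y => β • C y with hg
        have hgc : Continuous g := by fun_prop
        have hgd : DenseRange g := by
          have hsurj : Function.Surjective fun y : X => β • y := fun y =>
            ⟨β⁻¹ • y, by simp [smul_smul, mul_inv_cancel₀ hβ0]⟩
          have h1 : DenseRange fun y : X => β • y := hsurj.denseRange
          exact DenseRange.comp h1 hC (continuous_const_smul _)
        have hE : Dense (g '' {y : X | ∃ α : ℂ, ‖α‖ ≤ 1 ∧ ∃ z : ℂ, y = α • S z x}) :=
          hgd.dense_image hgc hx
        obtain ⟨y, hyV, hyE⟩ := hE.inter_open_nonempty V hV hVne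
        obtain ⟨y', ⟨δ, hδ1, v, rfl⟩, rfl⟩ := hyE
        set γ : ℂ := β * δ with hγ
        have hyval : g (δ • S v x) = γ • C (S v x) := by
          simp [hg, hγ, smul_smul, map_smul]
        rw [hyval] at hyV
        have hγ0 : γ ≠ 0 := by
          intro hh
          rw [hh, zero_smul] at hyV
          exact h0V hyV
        refine ⟨γ / β, div_ne_zero hγ0 hβ0, ?_, v - w, ?_⟩
        · rw [norm_div, div_le_one (norm_pos_iff.2 hβ0), hγ, norm_mul]
          calc ‖β‖ * ‖δ‖ ≤ ‖β‖ * 1 := by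
                exact mul_le_mul_of_nonneg_left hδ1 (norm_nonneg β)
          _ = ‖β‖ := mul_one _
        · refine ⟨S (v - w) ((γ / β) • (β • S w x)),
            ⟨(γ / β) • (β • S w x), Set.smul_mem_smul_set hβU, rfl⟩, ?_⟩
          have hsm : (γ / β) • (β • S w x) = γ • S w x := by
            rw [smul_smul, div_mul_cancel₀ _ hβ0]
          rw [hsm, map_smul]
          have hkey : S (v - w) (S w x) = S v (C x) := by
            have h1 := congrArg (fun T : X →L[ℂ] X => T x) (hSadd (v - w) w)
            simpa using h1.symm
          rw [hkey, ← hcomm]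
          exact hyV
      · -- degenerate case: `U ⊆ closure {0}`, leading to a contradiction with `0 ∉ V`
        exfalso
        push_neg at hβex
        have hsub : U ∩ {y : X | ∃ α : ℂ, ‖α‖ ≤ 1 ∧ ∃ z : ℂ, y = α • S z x}
            ⊆ {(0 : X)} := by
          rintro y ⟨hyU, α, hα1, z, rfl⟩
          rcases eq_or_ne α 0 with h | h
          · simp [h]
          · exact absurd hyU (hβex α h hα1 z)
        have hUcl : U ⊆ closure {(0 : X)} :=
          (hx.open_subset_closure_inter hU).trans (closure_mono hsub)
        set N : Submodule ℂ X := (⊥ : Submodule ℂ X).topologicalClosure with hN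
        have hNcoe : (N : Set X) = closure {(0 : X)} := by
          rw [hN, Submodule.topologicalClosure_coe, Submodule.bot_coe]
        obtain ⟨u₀, hu₀⟩ := hUne
        have hu₀N : u₀ ∈ N := by rw [← SetLike.mem_coe, hNcoe]; exact hUcl hu₀
        have hUN : ∀ u ∈ U, u ∈ N := fun u hu => by
          rw [← SetLike.mem_coe, hNcoe]; exact hUcl hu
        have hNopen : IsOpen (N : Set X) := by
          rw [isOpen_iff_forall_mem_open]
          intro y hy
          refine ⟨(fun p => (y - u₀) + p) '' U, ?_, ?_, ?_⟩
          · rintro _ ⟨u, hu, rfl⟩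
            exact N.add_mem (N.sub_mem hy hu₀N) (hUN u hu)
          · exact (Homeomorph.addLeft (y - u₀)).isOpenMap U hU
          · exact ⟨u₀, hu₀, by module⟩
        have hNuniv : ∀ y : X, y ∈ N := by
          intro y
          set T : AddSubgroup ℂ :=
            { carrier := {t : ℂ | t • y ∈ N}
              zero_mem' := by simp [N.zero_mem]
              add_mem' := fun {a b} ha hb => by
                simpa [add_smul] using N.add_mem ha hb
              neg_mem' := fun {a} ha => by
                simpa [neg_smul] using N.neg_mem ha } with hT
          have hTopen : IsOpen (T : Set ℂ) := by
            have hpre : (T : Set ℂ) = (fun t : ℂ => t • y) ⁻¹' (N : Set X) := rfl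
            rw [hpre]
            exact hNopen.preimage (by fun_prop)
          have hTclopen : IsClopen (T : Set ℂ) :=
            ⟨T.isClosed_of_isOpen hTopen, hTopen⟩
          have hTuniv : (T : Set ℂ) = Set.univ :=
            hTclopen.eq_univ ⟨0, T.zero_mem⟩
          have h1 : (1 : ℂ) ∈ T := by rw [← SetLike.mem_coe, hTuniv]; trivial
          simpa [hT] using h1
        obtain ⟨v₀, hv₀⟩ := hVne
        have hv₀cl : v₀ ∈ closure {(0 : X)} := by rw [← hNcoe]; exact hNuniv v₀
        obtain ⟨p, hpV, hp0⟩ := mem_closure_iff.1 hv₀cl V hV hv₀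
        rw [Set.mem_singleton_iff] at hp0
        exact h0V (hp0 ▸ hpV)
  · -- disk transitive → diskcyclic (Baire category argument)
    intro h
    obtain ⟨b, hbc, hbne, hbb⟩ := TopologicalSpace.exists_countable_basis X
    set F : Set X → Set X :=
      fun V => {x : X | ∃ α : ℂ, ‖α‖ ≤ 1 ∧ ∃ z : ℂ, α • S z x ∈ V} with hF
    have hFopen : ∀ V ∈ b, IsOpen (F V) := by
      intro V hV
      have hun : F V = ⋃ (α : ℂ) (_ : ‖α‖ ≤ 1) (z : ℂ), (fun x : X => α • S z x) ⁻¹' V := by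
        ext x
        simp [hF, Set.mem_iUnion]
      rw [hun]
      refine isOpen_iUnion fun α => isOpen_iUnion fun _ => isOpen_iUnion fun z =>
        (hbb.isOpen hV).preimage ?_
      fun_prop
    have hFdense : ∀ V ∈ b, Dense (F V) := by
      intro V hV
      rw [dense_iff_inter_open]
      intro W hW hWne
      have hVne : V.Nonempty := Set.nonempty_iff_ne_empty.2 fun hh => hbne (hh ▸ hV)
      obtain ⟨α, hα0, hα1, z, y, ⟨p, ⟨u, hu, rfl⟩, rfl⟩, hyV⟩ :=
        h W V hW (hbb.isOpen hV) hWne hVne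
      refine ⟨u, hu, α, hα1, z, ?_⟩
      simpa [map_smul] using hyV
    have hdense : Dense (⋂₀ (F '' b)) := by
      refine dense_sInter_of_isOpen ?_ (hbc.image F) ?_
      · rintro _ ⟨V, hV, rfl⟩; exact hFopen V hV
      · rintro _ ⟨V, hV, rfl⟩; exact hFdense V hV
    obtain ⟨x, hxmem⟩ := hdense.nonempty
    refine ⟨x, (hbb.dense_iff).2 fun o ho hone => ?_⟩
    have hxo : x ∈ F o := hxmem (F o) ⟨o, ho, rfl⟩
    obtain ⟨α, hα1, z, hz⟩ := hxo
    exact ⟨α • S z x, hz, α, hα1, z, rfl⟩
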